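/- (Complete-data corollary) If Y° ∈ ℂ^{N×L} has an atomic decomposition Y° = Σ_{j=1}^K c_j a(f_j) φ_j with K < (N + rank(Y°))/2, then this is the unique atomic decomposition achieving the atomic ℓ₀ norm, i.e., K = ‖Y°‖_{𝒜,0} and any other atomic decomposition of order at most K coincides with it. -/

import Mathlib

open Matrix

/-- The atom `a(f)φ ∈ ℂ^{N×L}`. -/
noncomputable def atom (N L : ℕ) (f : ℝ) (φ : Fin L → ℂ) : Matrix (Fin N) (Fin L) ℂ :=
  Matrix.of fun (i : Fin N) (l : Fin L) =>
    Complex.exp (2 * Real.pi * Complex.I * ((i : ℕ) : ℂ) * (f : ℂ)) * φ l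

/-- The atomic `ℓ₀` norm. -/
noncomputable def atomicL0 (N L : ℕ) (Y : Matrix (Fin N) (Fin L) ℂ) : ℕ :=
  sInf {K : ℕ | ∃ (c : Fin K → ℝ) (f : Fin K → ℝ) (φ : Fin K → Fin L → ℂ),
    (∀ k, 0 < c k) ∧ (∀ k, f k ∈ Set.Ico (0 : ℝ) 1) ∧
    (∀ k, ∑ l, ‖φ k l‖ ^ 2 = 1) ∧
    Y = ∑ k, (c k : ℂ) • atom N L (f k) (φ k)}

noncomputable def zc (x : ℝ) : ℂ := Complex.exp (2 * Real.pi * Complex.I * x)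

noncomputable def vz (N : ℕ) (x : ℝ) : Fin N → ℂ := fun i => zc x ^ (i : ℕ)

lemma atom_apply (N L : ℕ) (f : ℝ) (φ : Fin L → ℂ) (i : Fin N) (l : Fin L) :
    atom N L f φ i l = vz N f i * φ l := by
  show Complex.exp (2 * Real.pi * Complex.I * ((i : ℕ) : ℂ) * (f : ℂ)) * φ l = _
  rw [show (2 * (Real.pi:ℂ) * Complex.I * ((i : ℕ) : ℂ) * (f : ℂ))
      = ((i:ℕ) : ℂ) * (2 * Real.pi * Complex.I * f) by ring, Complex.exp_nat_mul]
  rfl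

lemma zc_injOn {x y : ℝ} (hx : x ∈ Set.Ico (0:ℝ) 1) (hy : y ∈ Set.Ico (0:ℝ) 1)
    (h : zc x = zc y) : x = y := by
  rw [zc, zc, Complex.exp_eq_exp_iff_exists_int] at h
  obtain ⟨n, hn⟩ := h
  have h2 : (x : ℂ) = (y : ℂ) + n := by
    have hπ : (2 * (Real.pi:ℂ) * Complex.I) ≠ 0 := by
      have : (Real.pi:ℂ) ≠ 0 := Complex.ofReal_ne_zero.mpr Real.pi_ne_zero
      simp [this, Complex.I_ne_zero]
    have : (2 * (Real.pi:ℂ) * Complex.I) * x = (2 * (Real.pi:ℂ) * Complex.I) * ((y:ℂ) + n) := by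
      linear_combination hn
    exact mul_left_cancel₀ hπ this
  have h3 : x = y + (n : ℝ) := by exact_mod_cast h2
  have : n = 0 := by
    obtain ⟨hx0, hx1⟩ := hx; obtain ⟨hy0, hy1⟩ := hy
    have : (n:ℝ) = x - y := by linarith
    have h4 : (-1:ℝ) < n := by rw [this]; linarith
    have h5 : (n:ℝ) < 1 := by rw [this]; linarith
    exact_mod_cast by
      have h4' : (-1:ℤ) < n := by exact_mod_cast h4
      have h5' : (n:ℤ) < 1 := by exact_mod_cast h5
      omega
  rw [h3, this]; simp

lemma li_fin {N m : ℕ} (hm : m ≤ N) (w : Fin m → ℂ) (hw : Function.Injective w) :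
    LinearIndependent ℂ (fun j (i : Fin N) => w j ^ (i : ℕ)) := by
  rw [Fintype.linearIndependent_iff]
  intro g hg
  have h0 : ∀ i : Fin N, ∑ j, g j * w j ^ (i : ℕ) = 0 := by
    intro i
    have := congrFun hg i
    simpa [Finset.sum_apply] using this
  have hz : g = 0 := by
    apply Matrix.eq_zero_of_forall_pow_sum_mul_pow_eq_zero (f := w) (v := g) hw
    intro i
    have := h0 (Fin.castLE hm i)
    simpa using this
  intro j; rw [hz]; rfl

lemma li_finset {N : ℕ} (s : Finset ℝ) (hcard : s.card ≤ N)
    (h01 : ∀ x ∈ s, x ∈ Set.Ico (0:ℝ) 1) :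
    LinearIndependent ℂ (fun (x : {x // x ∈ s}) => vz N x) := by
  have hw : Function.Injective (fun j : Fin s.card => zc ((s.equivFin.symm j : ℝ))) := by
    intro a b hab
    have := zc_injOn (h01 _ (s.equivFin.symm a).2) (h01 _ (s.equivFin.symm b).2) hab
    have h2 : s.equivFin.symm a = s.equivFin.symm b := Subtype.ext this
    exact s.equivFin.symm.injective h2
  have h := li_fin hcard _ hw
  exact (linearIndependent_equiv' s.equivFin.symm (funext fun j => rfl)).mp h

lemma col_eq {N L K₀ : ℕ} (c : Fin K₀ → ℝ) (f : Fin K₀ → ℝ) (φ : Fin K₀ → Fin L → ℂ)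
    (Y : Matrix (Fin N) (Fin L) ℂ)
    (h : Y = ∑ k, (c k : ℂ) • atom N L (f k) (φ k)) (l : Fin L) :
    (fun i => Y i l) = ∑ k, ((c k : ℂ) * φ k l) • vz N (f k) := by
  funext i
  rw [h]
  simp only [Finset.sum_apply, Matrix.sum_apply, Matrix.smul_apply, Pi.smul_apply,
    atom_apply, smul_eq_mul]
  exact Finset.sum_congr rfl fun k _ => by ring

lemma core {N L K₁ K₂ : ℕ}
    (c₁ : Fin K₁ → ℝ) (f₁ : Fin K₁ → ℝ) (φ₁ : Fin K₁ → Fin L → ℂ)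
    (hf₁ : ∀ k, f₁ k ∈ Set.Ico (0:ℝ) 1)
    (c₂ : Fin K₂ → ℝ) (f₂ : Fin K₂ → ℝ) (φ₂ : Fin K₂ → Fin L → ℂ)
    (hf₂ : ∀ k, f₂ k ∈ Set.Ico (0:ℝ) 1)
    (Y : Matrix (Fin N) (Fin L) ℂ)
    (h₁ : Y = ∑ k, (c₁ k : ℂ) • atom N L (f₁ k) (φ₁ k))
    (h₂ : Y = ∑ k, (c₂ k : ℂ) • atom N L (f₂ k) (φ₂ k))
    (hrank : K₁ + K₂ < N + Y.rank) :
    ∀ (ω : ℝ) (l : Fin L),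
      ∑ k ∈ Finset.univ.filter (fun k => f₁ k = ω), (c₁ k : ℂ) * φ₁ k l
        = ∑ k ∈ Finset.univ.filter (fun k => f₂ k = ω), (c₂ k : ℂ) * φ₂ k l := by
  classical
  set S : Finset ℝ := Finset.univ.image f₁ with hS
  set T : Finset ℝ := Finset.univ.image f₂ with hT
  set s : Finset ℝ := S ∪ T with hs
  have h01s : ∀ x ∈ s, x ∈ Set.Ico (0:ℝ) 1 := by
    intro x hx
    rcases Finset.mem_union.mp hx with h | h
    · obtain ⟨k, _, rfl⟩ := Finset.mem_image.mp h; exact hf₁ k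
    · obtain ⟨k, _, rfl⟩ := Finset.mem_image.mp h; exact hf₂ k
  -- cardinality bound
  have hsN : s.card ≤ N := by
    by_contra hN
    push_neg at hN
    set U : Submodule ℂ (Fin N → ℂ) := Submodule.span ℂ (vz N '' ↑S) with hU
    set V : Submodule ℂ (Fin N → ℂ) := Submodule.span ℂ (vz N '' ↑T) with hV
    have hcolU : LinearMap.range Y.mulVecLin ≤ U := by
      rw [Matrix.range_mulVecLin, Submodule.span_le]
      rintro - ⟨l, rfl⟩
      have : Yᵀ l = ∑ k, ((c₁ k : ℂ) * φ₁ k l) • vz N (f₁ k) := col_eq c₁ f₁ φ₁ Y h₁ l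
      rw [show Y.col l = Yᵀ l from rfl, this]
      exact Submodule.sum_mem _ fun k _ => Submodule.smul_mem _ _
        (Submodule.subset_span ⟨f₁ k, by simp [hS], rfl⟩)
    have hcolV : LinearMap.range Y.mulVecLin ≤ V := by
      rw [Matrix.range_mulVecLin, Submodule.span_le]
      rintro - ⟨l, rfl⟩
      have : Yᵀ l = ∑ k, ((c₂ k : ℂ) * φ₂ k l) • vz N (f₂ k) := col_eq c₂ f₂ φ₂ Y h₂ l
      rw [show Y.col l = Yᵀ l from rfl, this]
      exact Submodule.sum_mem _ fun k _ => Submodule.smul_mem _ _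
        (Submodule.subset_span ⟨f₂ k, by simp [hT], rfl⟩)
    have hrle : Y.rank ≤ Module.finrank ℂ (U ⊓ V : Submodule ℂ (Fin N → ℂ)) :=
      Submodule.finrank_mono (le_inf hcolU hcolV)
    have hUle : Module.finrank ℂ U ≤ K₁ := by
      have h1 : U = Submodule.span ℂ ((S.image (vz N) : Finset (Fin N → ℂ)) : Set (Fin N → ℂ)) := by
        simp [hU, Finset.coe_image]
      calc Module.finrank ℂ U ≤ (S.image (vz N)).card := by
            rw [h1]; exact finrank_span_finset_le_card _
        _ ≤ S.card := Finset.card_image_le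
        _ ≤ K₁ := by simpa [hS] using Finset.card_image_le (f := f₁) (s := Finset.univ)
    have hVle : Module.finrank ℂ V ≤ K₂ := by
      have h1 : V = Submodule.span ℂ ((T.image (vz N) : Finset (Fin N → ℂ)) : Set (Fin N → ℂ)) := by
        simp [hV, Finset.coe_image]
      calc Module.finrank ℂ V ≤ (T.image (vz N)).card := by
            rw [h1]; exact finrank_span_finset_le_card _
        _ ≤ T.card := Finset.card_image_le
        _ ≤ K₂ := by simpa [hT] using Finset.card_image_le (f := f₂) (s := Finset.univ)
    have hsup : N ≤ Module.finrank ℂ (U ⊔ V : Submodule ℂ (Fin N → ℂ)) := by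
      obtain ⟨t, hts, htc⟩ := Finset.exists_subset_card_eq hN.le
      have hli := li_finset t (le_of_eq htc) (fun x hx => h01s x (hts hx))
      have hdim : Module.finrank ℂ (Submodule.span ℂ (Set.range fun (x : {x // x ∈ t}) => vz N x)) = N := by
        rw [finrank_span_eq_card hli]
        simp [htc]
      have hle : Submodule.span ℂ (Set.range fun (x : {x // x ∈ t}) => vz N x) ≤ U ⊔ V := by
        rw [Submodule.span_le]
        rintro - ⟨⟨x, hx⟩, rfl⟩
        rcases Finset.mem_union.mp (hts hx) with h | h
        · exact Submodule.mem_sup_left (Submodule.subset_span ⟨x, h, rfl⟩)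
        · exact Submodule.mem_sup_right (Submodule.subset_span ⟨x, h, rfl⟩)
      calc N = _ := hdim.symm
        _ ≤ _ := Submodule.finrank_mono hle
    have hkey := Submodule.finrank_sup_add_finrank_inf_eq U V
    have : N + Y.rank ≤ K₁ + K₂ := by
      calc N + Y.rank ≤ Module.finrank ℂ (U ⊔ V : Submodule ℂ (Fin N → ℂ))
            + Module.finrank ℂ (U ⊓ V : Submodule ℂ (Fin N → ℂ)) := add_le_add hsup hrle
        _ = Module.finrank ℂ U + Module.finrank ℂ V := hkey
        _ ≤ K₁ + K₂ := add_le_add hUle hVle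
    omega
  -- the independence argument
  intro ω l
  have hli := li_finset s hsN h01s
  set g : ℝ → ℂ := fun x =>
    (∑ k ∈ Finset.univ.filter (fun k => f₁ k = x), (c₁ k : ℂ) * φ₁ k l)
      - ∑ k ∈ Finset.univ.filter (fun k => f₂ k = x), (c₂ k : ℂ) * φ₂ k l with hg
  have hsum1 : ∀ (K₀ : ℕ) (c : Fin K₀ → ℝ) (f : Fin K₀ → ℝ) (φ : Fin K₀ → Fin L → ℂ),
      (∀ k, f k ∈ s) →
      ∑ x ∈ s, (∑ k ∈ Finset.univ.filter (fun k => f k = x), (c k : ℂ) * φ k l) • vz N x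
        = ∑ k, ((c k : ℂ) * φ k l) • vz N (f k) := by
    intro K₀ c f φ hmem
    rw [← Finset.sum_fiberwise_of_maps_to (fun k _ => hmem k)
      (fun k => ((c k : ℂ) * φ k l) • vz N (f k))]
    refine Finset.sum_congr rfl fun x _ => ?_
    rw [Finset.sum_smul]
    refine Finset.sum_congr rfl fun k hk => ?_
    rw [(Finset.mem_filter.mp hk).2]
  have hzero : ∑ x ∈ s, g x • vz N x = 0 := by
    simp only [hg, sub_smul, Finset.sum_sub_distrib]
    rw [hsum1 K₁ c₁ f₁ φ₁ (fun k => Finset.mem_union_left _ (by simp [hS])),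
      hsum1 K₂ c₂ f₂ φ₂ (fun k => Finset.mem_union_right _ (by simp [hT])),
      ← col_eq c₁ f₁ φ₁ Y h₁ l, ← col_eq c₂ f₂ φ₂ Y h₂ l, sub_self]
  have hg0 : ∀ x ∈ s, g x = 0 := by
    have := Fintype.linearIndependent_iff.mp hli (fun x => g x)
    have h2 : ∑ (x : {x // x ∈ s}), g x • vz N x = 0 := by
      rw [← hzero]
      exact Finset.sum_attach s (fun x => g x • vz N x)
    intro x hx
    exact this h2 ⟨x, hx⟩
  by_cases hω : ω ∈ s
  · have := hg0 ω hω
    rw [hg] at this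
    linear_combination this
  · have e1 : Finset.univ.filter (fun k => f₁ k = ω) = ∅ := by
      apply Finset.filter_eq_empty_iff.mpr
      intro k _
      exact fun h => hω (Finset.mem_union_left _ (by simp [hS, ← h]))
    have e2 : Finset.univ.filter (fun k => f₂ k = ω) = ∅ := by
      apply Finset.filter_eq_empty_iff.mpr
      intro k _
      exact fun h => hω (Finset.mem_union_right _ (by simp [hT, ← h]))
    rw [e1, e2]
    simp

lemma norm_scaled {L : ℕ} (r : ℝ) (ψ : Fin L → ℂ) :
    ∑ l, ‖(r : ℂ) * ψ l‖ ^ 2 = r ^ 2 * ∑ l, ‖ψ l‖ ^ 2 := by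
  rw [Finset.mul_sum]
  refine Finset.sum_congr rfl fun l _ => ?_
  rw [norm_mul, mul_pow, Complex.norm_real, Real.norm_eq_abs, sq_abs]


/-- (Complete-data corollary) If `Y° ∈ ℂ^{N×L}` has an atomic decomposition of order `K`
with `2K < N + rank(Y°)`, then `K = ‖Y°‖_{𝒜,0}` and any other atomic decomposition of
order at most `K` coincides with it (up to permutation of the atoms). -/
theorem stmt12 (N L K : ℕ)
    (c : Fin K → ℝ) (f : Fin K → ℝ) (φ : Fin K → Fin L → ℂ)
    (hc : ∀ k, 0 < c k) (hf : ∀ k, f k ∈ Set.Ico (0 : ℝ) 1)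
    (hinj : Function.Injective f) (hφ : ∀ k, ∑ l, ‖φ k l‖ ^ 2 = 1)
    (Y₀ : Matrix (Fin N) (Fin L) ℂ)
    (hY₀ : Y₀ = ∑ k, (c k : ℂ) • atom N L (f k) (φ k))
    (hK : 2 * K < N + Y₀.rank) :
    atomicL0 N L Y₀ = K ∧
    (∀ (K' : ℕ), K' ≤ K →
      ∀ (c' : Fin K' → ℝ) (f' : Fin K' → ℝ) (φ' : Fin K' → Fin L → ℂ),
      (∀ k, 0 < c' k) → (∀ k, f' k ∈ Set.Ico (0 : ℝ) 1) → Function.Injective f' →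
      (∀ k, ∑ l, ‖φ' k l‖ ^ 2 = 1) →
      Y₀ = ∑ k, (c' k : ℂ) • atom N L (f' k) (φ' k) →
      ∃ e : Fin K' ≃ Fin K, ∀ k, c' k = c (e k) ∧ f' k = f (e k) ∧ φ' k = φ (e k)) := by
  classical
  have hmem : K ∈ {K : ℕ | ∃ (c : Fin K → ℝ) (f : Fin K → ℝ) (φ : Fin K → Fin L → ℂ),
      (∀ k, 0 < c k) ∧ (∀ k, f k ∈ Set.Ico (0 : ℝ) 1) ∧
      (∀ k, ∑ l, ‖φ k l‖ ^ 2 = 1) ∧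
      Y₀ = ∑ k, (c k : ℂ) • atom N L (f k) (φ k)} := ⟨c, f, φ, hc, hf, hφ, hY₀⟩
  have e1 : ∀ j : Fin K, Finset.univ.filter (fun k => f k = f j) = {j} := by
    intro j; ext k
    simp [hinj.eq_iff]
  have hlb : ∀ K'' ∈ {K : ℕ | ∃ (c : Fin K → ℝ) (f : Fin K → ℝ) (φ : Fin K → Fin L → ℂ),
      (∀ k, 0 < c k) ∧ (∀ k, f k ∈ Set.Ico (0 : ℝ) 1) ∧
      (∀ k, ∑ l, ‖φ k l‖ ^ 2 = 1) ∧
      Y₀ = ∑ k, (c k : ℂ) • atom N L (f k) (φ k)}, K ≤ K'' := by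
    rintro K'' ⟨c'', f'', φ'', hc'', hf'', hφ'', hY''⟩
    by_contra hlt
    push_neg at hlt
    have hrank : K + K'' < N + Y₀.rank := by omega
    have hcoef := core c f φ hf c'' f'' φ'' hf'' Y₀ hY₀ hY'' hrank
    have hsub : Finset.univ.image f ⊆ Finset.univ.image f'' := by
      intro ω hω
      obtain ⟨j, -, rfl⟩ := Finset.mem_image.mp hω
      by_contra hnot
      have e2 : Finset.univ.filter (fun k => f'' k = f j) = ∅ :=
        Finset.filter_eq_empty_iff.mpr fun k _ hk =>
          hnot (Finset.mem_image.mpr ⟨k, Finset.mem_univ k, hk⟩)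
      have hz : ∀ l, φ j l = 0 := by
        intro l
        have hcl := hcoef (f j) l
        rw [e1 j, e2] at hcl
        simp only [Finset.sum_singleton, Finset.sum_empty] at hcl
        have hcne : ((c j : ℝ) : ℂ) ≠ 0 := by
          exact_mod_cast ne_of_gt (hc j)
        exact (mul_eq_zero.mp hcl).resolve_left hcne
      have := hφ j
      simp [hz] at this
    have hKle : K ≤ K'' := by
      calc K = (Finset.univ.image f).card := by
            rw [Finset.card_image_of_injective _ hinj, Finset.card_univ, Fintype.card_fin]
        _ ≤ (Finset.univ.image f'').card := Finset.card_le_card hsub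
        _ ≤ K'' := by simpa using Finset.card_image_le (f := f'') (s := Finset.univ)
    omega
  have h1 : atomicL0 N L Y₀ = K :=
    le_antisymm (Nat.sInf_le hmem) (le_csInf ⟨K, hmem⟩ hlb)
  refine ⟨h1, ?_⟩
  intro K' hK' c' f' φ' hc' hf' hinj' hφ' hY'
  have hrank : K + K' < N + Y₀.rank := by omega
  have hcoef := core c f φ hf c' f' φ' hf' Y₀ hY₀ hY' hrank
  have e1' : ∀ j : Fin K', Finset.univ.filter (fun k => f' k = f' j) = {j} := by
    intro j; ext k
    simp [hinj'.eq_iff]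
  have hcne : ∀ j, ((c j : ℝ) : ℂ) ≠ 0 := fun j => by exact_mod_cast ne_of_gt (hc j)
  have hcne' : ∀ j, ((c' j : ℝ) : ℂ) ≠ 0 := fun j => by exact_mod_cast ne_of_gt (hc' j)
  have hmem' : ∀ k0 : Fin K', ∃ j, f j = f' k0 := by
    intro k0
    by_contra hno
    push_neg at hno
    have eempty : Finset.univ.filter (fun k => f k = f' k0) = ∅ :=
      Finset.filter_eq_empty_iff.mpr fun k _ => hno k
    have hz : ∀ l, φ' k0 l = 0 := by
      intro l
      have hcl := hcoef (f' k0) l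
      rw [eempty, e1' k0] at hcl
      simp only [Finset.sum_singleton, Finset.sum_empty] at hcl
      exact (mul_eq_zero.mp hcl.symm).resolve_left (hcne' k0)
    have := hφ' k0
    simp [hz] at this
  have hmem2 : ∀ j : Fin K, ∃ k, f' k = f j := by
    intro j
    by_contra hno
    push_neg at hno
    have eempty : Finset.univ.filter (fun k => f' k = f j) = ∅ :=
      Finset.filter_eq_empty_iff.mpr fun k _ => hno k
    have hz : ∀ l, φ j l = 0 := by
      intro l
      have hcl := hcoef (f j) l
      rw [eempty, e1 j] at hcl
      simp only [Finset.sum_singleton, Finset.sum_empty] at hcl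
      exact (mul_eq_zero.mp hcl).resolve_left (hcne j)
    have := hφ j
    simp [hz] at this
  choose g hgf using hmem'
  choose h2 hh2 using hmem2
  have hg_inj : Function.Injective g := fun a b hab =>
    hinj' (by rw [← hgf a, ← hgf b, hab])
  have hh_inj : Function.Injective h2 := fun a b hab =>
    hinj (by rw [← hh2 a, ← hh2 b, hab])
  have hKK : K = K' := le_antisymm
    (by simpa using Fintype.card_le_of_injective h2 hh_inj)
    (by simpa using Fintype.card_le_of_injective g hg_inj)
  have hbij : Function.Bijective g :=
    (Fintype.bijective_iff_injective_and_card g).mpr ⟨hg_inj, by simp [hKK]⟩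
  refine ⟨Equiv.ofBijective g hbij, ?_⟩
  intro k
  have heq : ∀ l, (c (g k) : ℂ) * φ (g k) l = (c' k : ℂ) * φ' k l := by
    intro l
    have hcl := hcoef (f' k) l
    have efilter : Finset.univ.filter (fun j => f j = f' k) = {g k} := by
      ext j
      simp only [Finset.mem_filter, Finset.mem_univ, true_and, Finset.mem_singleton]
      constructor
      · intro hj; exact hinj (hj.trans (hgf k).symm)
      · rintro rfl; exact hgf k
    rw [efilter, e1' k] at hcl
    simpa using hcl
  have hcc : c' k = c (g k) := by
    have hsum : ∑ l, ‖(c (g k) : ℂ) * φ (g k) l‖ ^ 2 = ∑ l, ‖(c' k : ℂ) * φ' k l‖ ^ 2 :=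
      Finset.sum_congr rfl fun l _ => by rw [heq l]
    rw [norm_scaled, norm_scaled, hφ (g k), hφ' k, mul_one, mul_one] at hsum
    nlinarith [hc (g k), hc' k]
  have hphi : φ' k = φ (g k) := by
    funext l
    have h3 := heq l
    rw [← hcc] at h3
    exact (mul_left_cancel₀ (hcne' k) h3).symm
  exact ⟨hcc, (hgf k).symm, hphi⟩
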